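/- The complete bipartite graph K_{s,t} with 3 ≤ s ≤ t is γ-2-critical: subdividing any 2 edges increases the domination number, while subdividing a single edge need not. -/
import Mathlib


open SimpleGraph

/-- `D` is a dominating set of `G`. -/
def SimpleGraph.IsDomSet {V : Type*} (G : SimpleGraph V) (D : Set V) : Prop :=
  ∀ v ∉ D, ∃ u ∈ D, G.Adj u v

/-- The domination number of `G`. -/
noncomputable def SimpleGraph.domNum {V : Type*} [Fintype V] (G : SimpleGraph V) : ℕ :=
  sInf {k | ∃ D : Finset V, D.card = k ∧ G.IsDomSet ↑D}

/-- The graph obtained from `G` by subdividing each edge in `F` once: each `e ∈ F`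
contributes a new vertex adjacent to the two endpoints of `e`, and the edges of `F`
are removed. -/
def SimpleGraph.subdiv {V : Type*} (G : SimpleGraph V) (F : Finset (Sym2 V)) :
    SimpleGraph (V ⊕ {e : Sym2 V // e ∈ F}) :=
  SimpleGraph.fromRel (fun a b => match a, b with
    | Sum.inl u, Sum.inl v => G.Adj u v ∧ s(u, v) ∉ F
    | Sum.inl u, Sum.inr e => u ∈ (e : Sym2 V)
    | _, _ => False)

/-- `G` is `γ`-`q`-critical: subdividing any `q` edges increases the domination number,
while some set of `q - 1` edges can be subdivided without increasing it. -/
def SimpleGraph.IsQCritical {V : Type*} [Fintype V] (G : SimpleGraph V) (q : ℕ) : Prop :=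
  (∀ F : Finset (Sym2 V), ↑F ⊆ G.edgeSet → F.card = q →
      G.domNum < (G.subdiv F).domNum) ∧
  (∃ F : Finset (Sym2 V), ↑F ⊆ G.edgeSet ∧ F.card = q - 1 ∧
      (G.subdiv F).domNum = G.domNum)

namespace Stmt8Aux

open SimpleGraph

/-- general domNum lower bound -/
lemma domNum_ge {V : Type*} [Fintype V] (G : SimpleGraph V) (n : ℕ)
    (h : ∀ E : Finset V, G.IsDomSet ↑E → n ≤ E.card) : n ≤ G.domNum := by
  have hne : {k | ∃ D : Finset V, D.card = k ∧ G.IsDomSet ↑D}.Nonempty :=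
    ⟨(Finset.univ : Finset V).card, Finset.univ, rfl,
      fun v hv => absurd (Finset.mem_coe.2 (Finset.mem_univ v)) hv⟩
  obtain ⟨D, hDc, hDd⟩ := Nat.sInf_mem hne
  show n ≤ sInf _
  exact le_of_le_of_eq (h D hDd) hDc

lemma domNum_le {V : Type*} [Fintype V] (G : SimpleGraph V) (D : Finset V)
    (hd : G.IsDomSet ↑D) : G.domNum ≤ D.card :=
  Nat.sInf_le ⟨D, rfl, hd⟩

variable {s t : ℕ}

lemma edge_char {e : Sym2 (Fin s ⊕ Fin t)}
    (h : e ∈ (completeBipartiteGraph (Fin s) (Fin t)).edgeSet) :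
    ∃ a b, e = s(Sum.inl a, Sum.inr b) := by
  induction e with
  | _ x y =>
    rw [SimpleGraph.mem_edgeSet] at h
    rcases x with x | x <;> rcases y with y | y <;> simp at h
    · exact ⟨x, y, rfl⟩
    · exact ⟨y, x, Sym2.eq_swap⟩

noncomputable def rt (d0 : Fin t) (e : Sym2 (Fin s ⊕ Fin t)) : Fin t :=
  if h : ∃ v : Fin t, Sum.inr v ∈ e then h.choose else d0

lemma rt_eq (d0 : Fin t) {a' : Fin s} {b' v : Fin t} {e : Sym2 (Fin s ⊕ Fin t)}
    (hee : e = s(Sum.inl a', Sum.inr b')) (hm : Sum.inr v ∈ e) : rt d0 e = v := by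
  subst hee
  have hv : v = b' := by simpa using hm
  have hex : ∃ w : Fin t, Sum.inr w ∈ s(Sum.inl a', Sum.inr b') := ⟨b', by simp⟩
  rw [rt, dif_pos hex]
  rcases Sym2.mem_iff.1 hex.choose_spec with h3 | h3
  · exact absurd h3 (by simp)
  · rw [Sum.inr.injEq] at h3
    rw [h3, hv]

noncomputable def lf (d0 : Fin s) (e : Sym2 (Fin s ⊕ Fin t)) : Fin s :=
  if h : ∃ u : Fin s, Sum.inl u ∈ e then h.choose else d0

lemma lf_eq (d0 : Fin s) {a' u : Fin s} {b' : Fin t} {e : Sym2 (Fin s ⊕ Fin t)}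
    (hee : e = s(Sum.inl a', Sum.inr b')) (hm : Sum.inl u ∈ e) : lf d0 e = u := by
  subst hee
  have hv : u = a' := by simpa using hm
  have hex : ∃ w : Fin s, Sum.inl w ∈ s(Sum.inl a', Sum.inr b') := ⟨a', by simp⟩
  rw [lf, dif_pos hex]
  rcases Sym2.mem_iff.1 hex.choose_spec with h3 | h3
  · rw [Sum.inl.injEq] at h3
    rw [h3, hv]
  · exact absurd h3 (by simp)

/-- If a small dominating set of the subdivision has no left vertex, contradiction. -/
lemma claimA (ht : 3 ≤ t) {F : Finset (Sym2 (Fin s ⊕ Fin t))}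
    (hF : ↑F ⊆ (completeBipartiteGraph (Fin s) (Fin t)).edgeSet)
    {D : Finset ((Fin s ⊕ Fin t) ⊕ {e : Sym2 (Fin s ⊕ Fin t) // e ∈ F})}
    (hD : ((completeBipartiteGraph (Fin s) (Fin t)).subdiv F).IsDomSet ↑D)
    (hc : D.card ≤ 2) : ∃ a : Fin s, Sum.inl (Sum.inl a) ∈ D := by
  by_contra hno
  push_neg at hno
  have ht0 : 0 < t := by omega
  set d0 : Fin t := ⟨0, ht0⟩ with hd0
  classical
  set g : ((Fin s ⊕ Fin t) ⊕ {e : Sym2 (Fin s ⊕ Fin t) // e ∈ F}) → Fin t :=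
    Sum.elim (Sum.elim (fun _ => d0) (fun v => v)) (fun e => rt d0 e.1) with hg
  have hB : (D.image g).card < Fintype.card (Fin t) := by
    have := Finset.card_image_le (f := g) (s := D)
    simp only [Fintype.card_fin]
    omega
  obtain ⟨v, hv⟩ : ∃ v : Fin t, v ∉ D.image g := by
    by_contra hall
    push_neg at hall
    have : D.image g = Finset.univ := Finset.eq_univ_iff_forall.2 hall
    rw [this, Finset.card_univ] at hB
    exact lt_irrefl _ hB
  have hvD : (Sum.inl (Sum.inr v) : ((Fin s ⊕ Fin t) ⊕ {e : Sym2 (Fin s ⊕ Fin t) // e ∈ F})) ∉ (↑D : Set ((Fin s ⊕ Fin t) ⊕ {e : Sym2 (Fin s ⊕ Fin t) // e ∈ F})) := by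
    intro hmem
    exact hv (Finset.mem_image.2 ⟨_, Finset.mem_coe.1 hmem, rfl⟩)
  obtain ⟨d, hdD, hadj⟩ := hD _ hvD
  rcases d with (a | v') | ⟨e, he⟩
  · exact hno a (Finset.mem_coe.1 hdD)
  · rw [SimpleGraph.subdiv, fromRel_adj] at hadj
    obtain ⟨-, h | h⟩ := hadj <;> simp at h
  · obtain ⟨a', b', heq⟩ := edge_char (hF (Finset.mem_coe.2 he))
    rw [SimpleGraph.subdiv, fromRel_adj] at hadj
    obtain ⟨-, h | h⟩ := hadj
    · exact h.elim
    · apply hv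
      refine Finset.mem_image.2 ⟨_, Finset.mem_coe.1 hdD, ?_⟩
      exact rt_eq d0 heq h

/-- If a small dominating set of the subdivision has no right vertex, contradiction. -/
lemma claimB (hs : 3 ≤ s) {F : Finset (Sym2 (Fin s ⊕ Fin t))}
    (hF : ↑F ⊆ (completeBipartiteGraph (Fin s) (Fin t)).edgeSet)
    {D : Finset ((Fin s ⊕ Fin t) ⊕ {e : Sym2 (Fin s ⊕ Fin t) // e ∈ F})}
    (hD : ((completeBipartiteGraph (Fin s) (Fin t)).subdiv F).IsDomSet ↑D)
    (hc : D.card ≤ 2) : ∃ b : Fin t, Sum.inl (Sum.inr b) ∈ D := by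
  by_contra hno
  push_neg at hno
  have hs0 : 0 < s := by omega
  set d0 : Fin s := ⟨0, hs0⟩ with hd0
  classical
  set g : ((Fin s ⊕ Fin t) ⊕ {e : Sym2 (Fin s ⊕ Fin t) // e ∈ F}) → Fin s :=
    Sum.elim (Sum.elim (fun u => u) (fun _ => d0)) (fun e => lf d0 e.1) with hg
  have hB : (D.image g).card < Fintype.card (Fin s) := by
    have := Finset.card_image_le (f := g) (s := D)
    simp only [Fintype.card_fin]
    omega
  obtain ⟨u, hu⟩ : ∃ u : Fin s, u ∉ D.image g := by
    by_contra hall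
    push_neg at hall
    have : D.image g = Finset.univ := Finset.eq_univ_iff_forall.2 hall
    rw [this, Finset.card_univ] at hB
    exact lt_irrefl _ hB
  have huD : (Sum.inl (Sum.inl u) : ((Fin s ⊕ Fin t) ⊕ {e : Sym2 (Fin s ⊕ Fin t) // e ∈ F})) ∉ (↑D : Set ((Fin s ⊕ Fin t) ⊕ {e : Sym2 (Fin s ⊕ Fin t) // e ∈ F})) := by
    intro hmem
    exact hu (Finset.mem_image.2 ⟨_, Finset.mem_coe.1 hmem, rfl⟩)
  obtain ⟨d, hdD, hadj⟩ := hD _ huD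
  rcases d with (a' | b') | ⟨e, he⟩
  · rw [SimpleGraph.subdiv, fromRel_adj] at hadj
    obtain ⟨-, h | h⟩ := hadj <;> simp at h
  · exact hno b' (Finset.mem_coe.1 hdD)
  · obtain ⟨a', b', heq⟩ := edge_char (hF (Finset.mem_coe.2 he))
    rw [SimpleGraph.subdiv, fromRel_adj] at hadj
    obtain ⟨-, h | h⟩ := hadj
    · exact h.elim
    · apply hu
      refine Finset.mem_image.2 ⟨_, Finset.mem_coe.1 hdD, ?_⟩
      exact lf_eq d0 heq h

/-- Key lemma for part 1: any dominating set of a 2-edge subdivision has ≥ 3 vertices. -/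
lemma lower3 (hs : 3 ≤ s) (hst : s ≤ t) {F : Finset (Sym2 (Fin s ⊕ Fin t))}
    (hF : ↑F ⊆ (completeBipartiteGraph (Fin s) (Fin t)).edgeSet) (hcard : F.card = 2)
    {D : Finset ((Fin s ⊕ Fin t) ⊕ {e : Sym2 (Fin s ⊕ Fin t) // e ∈ F})}
    (hD : ((completeBipartiteGraph (Fin s) (Fin t)).subdiv F).IsDomSet ↑D) :
    3 ≤ D.card := by
  classical
  rcases le_or_gt D.card 2 with hc | hc
  swap
  · omega
  exfalso
  obtain ⟨a, haD⟩ := claimA (by omega) hF hD hc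
  obtain ⟨b, hbD⟩ := claimB hs hF hD hc
  have hpair : ({Sum.inl (Sum.inl a), Sum.inl (Sum.inr b)} :
      Finset ((Fin s ⊕ Fin t) ⊕ {e : Sym2 (Fin s ⊕ Fin t) // e ∈ F})) ⊆ D := by
    intro x hx
    simp only [Finset.mem_insert, Finset.mem_singleton] at hx
    rcases hx with rfl | rfl
    · exact haD
    · exact hbD
  have hpc : ({Sum.inl (Sum.inl a), Sum.inl (Sum.inr b)} :
      Finset ((Fin s ⊕ Fin t) ⊕ {e : Sym2 (Fin s ⊕ Fin t) // e ∈ F})).card = 2 :=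
    Finset.card_pair (by simp)
  have hDeq : D = {Sum.inl (Sum.inl a), Sum.inl (Sum.inr b)} :=
    (Finset.eq_of_subset_of_card_le hpair (by omega)).symm
  obtain ⟨e1, e2, hne, hFeq⟩ := Finset.card_eq_two.1 hcard
  have he1F : e1 ∈ F := by rw [hFeq]; simp
  have he2F : e2 ∈ F := by rw [hFeq]; simp
  obtain ⟨a1, b1, he1⟩ := edge_char (hF (Finset.mem_coe.2 he1F))
  obtain ⟨a2, b2, he2⟩ := edge_char (hF (Finset.mem_coe.2 he2F))
  subst he1
  subst he2
  -- condition from subdivision vertex of e1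
  have hw1 : a = a1 ∨ b = b1 := by
    have hx : (Sum.inr ⟨s(Sum.inl a1, Sum.inr b1), he1F⟩ :
        (Fin s ⊕ Fin t) ⊕ {e : Sym2 (Fin s ⊕ Fin t) // e ∈ F}) ∉ (↑D : Set _) := by
      rw [hDeq]; simp
    obtain ⟨d, hdD, hadj⟩ := hD _ hx
    rw [hDeq] at hdD
    simp only [Finset.coe_insert, Finset.coe_singleton, Set.mem_insert_iff,
      Set.mem_singleton_iff] at hdD
    rw [SimpleGraph.subdiv, fromRel_adj] at hadj
    rcases hdD with rfl | rfl
    · left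
      obtain ⟨-, h | h⟩ := hadj
      · simpa using h
      · exact h.elim
    · right
      obtain ⟨-, h | h⟩ := hadj
      · simpa using h
      · exact h.elim
  have hw2 : a = a2 ∨ b = b2 := by
    have hx : (Sum.inr ⟨s(Sum.inl a2, Sum.inr b2), he2F⟩ :
        (Fin s ⊕ Fin t) ⊕ {e : Sym2 (Fin s ⊕ Fin t) // e ∈ F}) ∉ (↑D : Set _) := by
      rw [hDeq]; simp
    obtain ⟨d, hdD, hadj⟩ := hD _ hx
    rw [hDeq] at hdD
    simp only [Finset.coe_insert, Finset.coe_singleton, Set.mem_insert_iff,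
      Set.mem_singleton_iff] at hdD
    rw [SimpleGraph.subdiv, fromRel_adj] at hadj
    rcases hdD with rfl | rfl
    · left
      obtain ⟨-, h | h⟩ := hadj
      · simpa using h
      · exact h.elim
    · right
      obtain ⟨-, h | h⟩ := hadj
      · simpa using h
      · exact h.elim
  -- condition from vertex inr b1 / inr b2
  have h3 : b1 = b ∨ s(Sum.inl a, Sum.inr b1) ∉ F := by
    by_cases hb : b1 = b
    · exact Or.inl hb
    right
    have hx : (Sum.inl (Sum.inr b1) :
        (Fin s ⊕ Fin t) ⊕ {e : Sym2 (Fin s ⊕ Fin t) // e ∈ F}) ∉ (↑D : Set _) := by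
      rw [hDeq]; simp [hb]
    obtain ⟨d, hdD, hadj⟩ := hD _ hx
    rw [hDeq] at hdD
    simp only [Finset.coe_insert, Finset.coe_singleton, Set.mem_insert_iff,
      Set.mem_singleton_iff] at hdD
    rw [SimpleGraph.subdiv, fromRel_adj] at hadj
    rcases hdD with rfl | rfl
    · obtain ⟨-, h | h⟩ := hadj
      · exact h.2
      · simpa [Sym2.eq_swap] using h.2
    · obtain ⟨-, h | h⟩ := hadj <;> simp at h
  have h4 : b2 = b ∨ s(Sum.inl a, Sum.inr b2) ∉ F := by
    by_cases hb : b2 = b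
    · exact Or.inl hb
    right
    have hx : (Sum.inl (Sum.inr b2) :
        (Fin s ⊕ Fin t) ⊕ {e : Sym2 (Fin s ⊕ Fin t) // e ∈ F}) ∉ (↑D : Set _) := by
      rw [hDeq]; simp [hb]
    obtain ⟨d, hdD, hadj⟩ := hD _ hx
    rw [hDeq] at hdD
    simp only [Finset.coe_insert, Finset.coe_singleton, Set.mem_insert_iff,
      Set.mem_singleton_iff] at hdD
    rw [SimpleGraph.subdiv, fromRel_adj] at hadj
    rcases hdD with rfl | rfl
    · obtain ⟨-, h | h⟩ := hadj
      · exact h.2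
      · simpa [Sym2.eq_swap] using h.2
    · obtain ⟨-, h | h⟩ := hadj <;> simp at h
  have h5 : a1 = a ∨ s(Sum.inl a1, Sum.inr b) ∉ F := by
    by_cases ha : a1 = a
    · exact Or.inl ha
    right
    have hx : (Sum.inl (Sum.inl a1) :
        (Fin s ⊕ Fin t) ⊕ {e : Sym2 (Fin s ⊕ Fin t) // e ∈ F}) ∉ (↑D : Set _) := by
      rw [hDeq]; simp [ha]
    obtain ⟨d, hdD, hadj⟩ := hD _ hx
    rw [hDeq] at hdD
    simp only [Finset.coe_insert, Finset.coe_singleton, Set.mem_insert_iff,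
      Set.mem_singleton_iff] at hdD
    rw [SimpleGraph.subdiv, fromRel_adj] at hadj
    rcases hdD with rfl | rfl
    · obtain ⟨-, h | h⟩ := hadj <;> simp at h
    · obtain ⟨-, h | h⟩ := hadj
      · simpa [Sym2.eq_swap] using h.2
      · exact h.2
  have h6 : a2 = a ∨ s(Sum.inl a2, Sum.inr b) ∉ F := by
    by_cases ha : a2 = a
    · exact Or.inl ha
    right
    have hx : (Sum.inl (Sum.inl a2) :
        (Fin s ⊕ Fin t) ⊕ {e : Sym2 (Fin s ⊕ Fin t) // e ∈ F}) ∉ (↑D : Set _) := by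
      rw [hDeq]; simp [ha]
    obtain ⟨d, hdD, hadj⟩ := hD _ hx
    rw [hDeq] at hdD
    simp only [Finset.coe_insert, Finset.coe_singleton, Set.mem_insert_iff,
      Set.mem_singleton_iff] at hdD
    rw [SimpleGraph.subdiv, fromRel_adj] at hadj
    rcases hdD with rfl | rfl
    · obtain ⟨-, h | h⟩ := hadj <;> simp at h
    · obtain ⟨-, h | h⟩ := hadj
      · simpa [Sym2.eq_swap] using h.2
      · exact h.2
  have key1 : a = a1 ∧ b = b1 := by
    rcases hw1 with h | h
    · refine ⟨h, ?_⟩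
      rcases h3 with h3' | h3'
      · exact h3'.symm
      · rw [h] at h3'
        exact absurd he1F h3'
    · rcases h5 with h5' | h5'
      · exact ⟨h5'.symm, h⟩
      · rw [h] at h5'
        exact absurd he1F h5'
  have key2 : a = a2 ∧ b = b2 := by
    rcases hw2 with h | h
    · refine ⟨h, ?_⟩
      rcases h4 with h4' | h4'
      · exact h4'.symm
      · rw [h] at h4'
        exact absurd he2F h4'
    · rcases h6 with h6' | h6'
      · exact ⟨h6'.symm, h⟩
      · rw [h] at h6'
        exact absurd he2F h6'
  exact hne (by rw [← key1.1, ← key1.2, key2.1, key2.2])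

/-- an element of `Fin n` different from `a` -/
def pick {n : ℕ} (hn : 2 ≤ n) (a : Fin n) : Fin n :=
  if (a : ℕ) = 0 then ⟨1, by omega⟩ else ⟨0, by omega⟩

lemma pick_ne {n : ℕ} (hn : 2 ≤ n) (a : Fin n) : pick hn a ≠ a := by
  rw [pick]
  split <;> (intro h; rw [Fin.ext_iff] at h; simp at h; omega)

/-- γ(K_{s,t}) = 2 -/
lemma domNum_K (hs : 3 ≤ s) (hst : s ≤ t) :
    (completeBipartiteGraph (Fin s) (Fin t)).domNum = 2 := by
  classical
  have hs0 : 0 < s := by omega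
  have ht0 : 0 < t := by omega
  apply le_antisymm
  · have hcard : ({Sum.inl ⟨0, hs0⟩, Sum.inr ⟨0, ht0⟩} :
        Finset (Fin s ⊕ Fin t)).card = 2 := Finset.card_pair (by simp)
    calc (completeBipartiteGraph (Fin s) (Fin t)).domNum
        ≤ ({Sum.inl ⟨0, hs0⟩, Sum.inr ⟨0, ht0⟩} : Finset (Fin s ⊕ Fin t)).card := by
          apply domNum_le
          intro v hv
          rcases v with a | b
          · exact ⟨Sum.inr ⟨0, ht0⟩, by simp, by simp⟩
          · exact ⟨Sum.inl ⟨0, hs0⟩, by simp, by simp⟩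
      _ = 2 := hcard
  · apply domNum_ge
    intro E hE
    by_contra hlt
    push_neg at hlt
    have : E.card = 0 ∨ E.card = 1 := by omega
    rcases this with h0 | h1
    · rw [Finset.card_eq_zero] at h0
      subst h0
      obtain ⟨u, hu, -⟩ := hE (Sum.inl ⟨0, hs0⟩) (by simp)
      simp at hu
    · obtain ⟨x, hx⟩ := Finset.card_eq_one.1 h1
      subst hx
      rcases x with a | b
      · obtain ⟨u, hu, hadj⟩ := hE (Sum.inl (pick (by omega) a))
          (by simp [(pick_ne (by omega) a)])
        simp only [Finset.coe_singleton, Set.mem_singleton_iff] at hu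
        subst hu
        simp at hadj
      · obtain ⟨u, hu, hadj⟩ := hE (Sum.inr (pick (by omega : 2 ≤ t) b))
          (by simp [(pick_ne (by omega : 2 ≤ t) b)])
        simp only [Finset.coe_singleton, Set.mem_singleton_iff] at hu
        subst hu
        simp at hadj

/-- any dominating set of any subdivision (over a valid edge set) has ≥ 2 vertices -/
lemma lower2 (hs : 3 ≤ s) (hst : s ≤ t) {F : Finset (Sym2 (Fin s ⊕ Fin t))}
    (hF : ↑F ⊆ (completeBipartiteGraph (Fin s) (Fin t)).edgeSet)
    {D : Finset ((Fin s ⊕ Fin t) ⊕ {e : Sym2 (Fin s ⊕ Fin t) // e ∈ F})}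
    (hD : ((completeBipartiteGraph (Fin s) (Fin t)).subdiv F).IsDomSet ↑D) :
    2 ≤ D.card := by
  rcases le_or_gt D.card 2 with hc | hc
  swap
  · omega
  obtain ⟨a, haD⟩ := claimA (by omega) hF hD hc
  obtain ⟨b, hbD⟩ := claimB hs hF hD hc
  exact Finset.one_lt_card.2 ⟨_, haD, _, hbD, by simp⟩

end Stmt8Aux

open Stmt8Aux

theorem stmt8 (s t : ℕ) (hs : 3 ≤ s) (hst : s ≤ t) :
    (completeBipartiteGraph (Fin s) (Fin t)).IsQCritical 2 := by
  classical
  have hs0 : 0 < s := by omega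
  have ht0 : 0 < t := by omega
  constructor
  · intro F hF hcard
    rw [domNum_K hs hst]
    have h3 : 3 ≤ (((completeBipartiteGraph (Fin s) (Fin t)).subdiv F)).domNum :=
      domNum_ge _ 3 (fun E hE => lower3 hs hst hF hcard hE)
    omega
  · set e0 : Sym2 (Fin s ⊕ Fin t) := s(Sum.inl ⟨0, hs0⟩, Sum.inr ⟨0, ht0⟩) with he0
    refine ⟨{e0}, ?_, by simp, ?_⟩
    · intro e he
      simp only [Finset.coe_singleton, Set.mem_singleton_iff] at he
      subst he
      rw [SimpleGraph.mem_edgeSet]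
      simp
    · rw [domNum_K hs hst]
      have he0m : e0 ∈ ({e0} : Finset (Sym2 (Fin s ⊕ Fin t))) := Finset.mem_singleton_self e0
      apply le_antisymm
      · have hcard : ({Sum.inl (Sum.inl ⟨0, hs0⟩), Sum.inl (Sum.inr ⟨0, ht0⟩)} :
            Finset ((Fin s ⊕ Fin t) ⊕ {e : Sym2 (Fin s ⊕ Fin t) // e ∈ ({e0} : Finset _)})).card = 2 :=
          Finset.card_pair (by simp)
        rw [← hcard]
        apply domNum_le
        intro v hv
        rcases v with (a | b) | ⟨e, he⟩
        · simp only [Finset.coe_insert, Finset.coe_singleton, Set.mem_insert_iff,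
            Set.mem_singleton_iff] at hv
          have ha : a ≠ ⟨0, hs0⟩ := by
            intro h
            exact hv (Or.inl (by rw [h]))
          refine ⟨Sum.inl (Sum.inr ⟨0, ht0⟩), by simp, ?_⟩
          rw [SimpleGraph.subdiv, fromRel_adj]
          refine ⟨by simp, Or.inl ⟨by simp, ?_⟩⟩
          intro hmem
          rw [Finset.mem_singleton, he0] at hmem
          rw [Sym2.eq_iff] at hmem
          rcases hmem with ⟨h1, -⟩ | ⟨-, h2⟩
          · exact absurd h1 (by simp)
          · exact ha (Sum.inl.inj h2)
        · simp only [Finset.coe_insert, Finset.coe_singleton, Set.mem_insert_iff,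
            Set.mem_singleton_iff] at hv
          have hb : b ≠ ⟨0, ht0⟩ := by
            intro h
            exact hv (Or.inr (by rw [h]))
          refine ⟨Sum.inl (Sum.inl ⟨0, hs0⟩), by simp, ?_⟩
          rw [SimpleGraph.subdiv, fromRel_adj]
          refine ⟨by simp, Or.inl ⟨by simp, ?_⟩⟩
          intro hmem
          rw [Finset.mem_singleton, he0] at hmem
          rw [Sym2.eq_iff] at hmem
          rcases hmem with ⟨-, h1⟩ | ⟨h2, -⟩
          · exact hb (Sum.inr.inj h1)
          · exact absurd h2 (by simp)
        · have hee : e = e0 := Finset.mem_singleton.1 he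
          refine ⟨Sum.inl (Sum.inl ⟨0, hs0⟩), by simp, ?_⟩
          rw [SimpleGraph.subdiv, fromRel_adj]
          refine ⟨by simp, Or.inl ?_⟩
          show Sum.inl _ ∈ e
          rw [hee, he0]
          simp
      · exact domNum_ge _ 2 (fun E hE => lower2 hs hst (by
          intro e he
          simp only [Finset.coe_singleton, Set.mem_singleton_iff] at he
          subst he
          rw [SimpleGraph.mem_edgeSet]
          simp) hE)
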